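/- Let Ω ⊂ ℝ^r be compact and let d_{SW_2} be the Sliced 2-Wasserstein distance on probability measures on Ω, defined by d_{SW_2}(P,Q)² = ∫_{S^{r−1}} ∫_0^1 (F_{θ*_#P}^{[-1]}(t) − F_{θ*_#Q}^{[-1]}(t))² dt dσ(θ). Then for every γ ≥ 0 the Gaussian Sliced Wasserstein kernel K₂(P,Q) = exp(−γ · d_{SW_2}(P,Q)²) is a positive definite kernel: for every n ∈ ℕ, all probability measures P_1, …, P_n on Ω and all c ∈ ℝ^n, Σ_{i,j=1}^n cᵢ cⱼ exp(−γ · d_{SW_2}(P_i,P_j)²) ≥ 0. -/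

import Mathlib

open MeasureTheory
open scoped RealInnerProductSpace

/-- The generalized inverse cumulative distribution function (quantile function) of a
probability measure `μ` on `ℝ`: `F_μ^{[-1]}(t) = inf {x : F_μ(x) ≥ t}` where
`F_μ(x) = μ((−∞, x])`. -/
noncomputable def invCDF (μ : Measure ℝ) (t : ℝ) : ℝ :=
  sInf {x : ℝ | t ≤ (μ (Set.Iic x)).toReal}

/-- The uniform probability measure on the unit sphere `S^{r-1} ⊂ ℝ^r`
(the normalized surface measure). -/
noncomputable def uniformSphere (r : ℕ) :
    Measure (Metric.sphere (0 : EuclideanSpace ℝ (Fin r)) 1) :=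
  ((volume : Measure (EuclideanSpace ℝ (Fin r))).toSphere Set.univ)⁻¹ •
    (volume : Measure (EuclideanSpace ℝ (Fin r))).toSphere

/-- The squared Sliced 2-Wasserstein distance between probability measures on `ℝ^r`:
`d_{SW₂}(P,Q)² = ∫_{S^{r−1}} ∫_0^1 (F_{θ*_#P}^{[-1]}(t) − F_{θ*_#Q}^{[-1]}(t))² dt dσ(θ)`. -/
noncomputable def slicedW2Sq {r : ℕ} (P Q : Measure (EuclideanSpace ℝ (Fin r))) : ℝ :=
  ∫ θ : Metric.sphere (0 : EuclideanSpace ℝ (Fin r)) 1,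
    (∫ t in Set.Ioc (0 : ℝ) 1,
      (invCDF (P.map fun x => ⟪x, (θ : EuclideanSpace ℝ (Fin r))⟫) t -
        invCDF (Q.map fun x => ⟪x, (θ : EuclideanSpace ℝ (Fin r))⟫) t) ^ 2) ∂(uniformSphere r)

lemma gram_pow_nonneg {n : ℕ} (v : Fin n → Fin n → ℝ) (k : ℕ) :
    ∀ c : Fin n → ℝ, 0 ≤ ∑ i, ∑ j, c i * c j * (∑ a, v i a * v j a) ^ k := by
  induction k with
  | zero =>
    intro c
    have : ∑ i, ∑ j, c i * c j * (∑ a, v i a * v j a) ^ 0 = (∑ i, c i) ^ 2 := by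
      simp [pow_zero, mul_one, Finset.sum_mul_sum, sq]
    rw [this]; positivity
  | succ k ih =>
    intro c
    have key : ∑ i, ∑ j, c i * c j * (∑ a, v i a * v j a) ^ (k + 1)
        = ∑ a, ∑ i, ∑ j, (c i * v i a) * (c j * v j a) * (∑ b, v i b * v j b) ^ k := by
      have step1 : ∑ i, ∑ j, c i * c j * (∑ a, v i a * v j a) ^ (k + 1)
          = ∑ i, ∑ j, ∑ a, (c i * v i a) * (c j * v j a) * (∑ b, v i b * v j b) ^ k := by
        refine Finset.sum_congr rfl fun i _ => Finset.sum_congr rfl fun j _ => ?_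
        rw [pow_succ, ← mul_assoc, Finset.mul_sum]
        refine Finset.sum_congr rfl fun a _ => ?_
        ring
      have h1 : ∀ i : Fin n, ∑ j, ∑ a, (c i * v i a) * (c j * v j a) * (∑ b, v i b * v j b) ^ k
          = ∑ a, ∑ j, (c i * v i a) * (c j * v j a) * (∑ b, v i b * v j b) ^ k :=
        fun i => Finset.sum_comm
      rw [step1, Finset.sum_congr rfl fun i _ => h1 i, Finset.sum_comm]
    rw [key]
    exact Finset.sum_nonneg fun a _ => ih (fun i => c i * v i a)

open scoped MatrixOrder Matrix.Norms.L2Operator in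
lemma psd_exp {n : ℕ} (m : Fin n → Fin n → ℝ) (hsymm : ∀ i j, m i j = m j i)
    (hpsd : ∀ c : Fin n → ℝ, 0 ≤ ∑ i, ∑ j, c i * c j * m i j) (γ : ℝ) (hγ : 0 ≤ γ)
    (c : Fin n → ℝ) :
    0 ≤ ∑ i, ∑ j, c i * c j * Real.exp (-γ * (m i i + m j j - 2 * m i j)) := by
  classical
  -- build the PSD matrix
  set A : Matrix (Fin n) (Fin n) ℝ := Matrix.of m with hA
  have hAps : A.PosSemidef := by
    refine Matrix.PosSemidef.of_dotProduct_mulVec_nonneg ?_ ?_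
    · ext i j
      simp only [Matrix.conjTranspose_apply, Matrix.of_apply, star_trivial, hA]
      exact hsymm j i
    · intro x
      have := hpsd x
      simp only [dotProduct, Matrix.mulVec, star_trivial, Matrix.of_apply, hA]
      calc (0:ℝ) ≤ ∑ i, ∑ j, x i * x j * m i j := this
        _ = ∑ i, x i * ∑ j, m i j * x j := by
            refine Finset.sum_congr rfl fun i _ => ?_
            rw [Finset.mul_sum]
            exact Finset.sum_congr rfl fun j _ => by ring
  set S := CFC.sqrt A with hS
  have hSps : S.PosSemidef := Matrix.nonneg_iff_posSemidef.mp (CFC.sqrt_nonneg A)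
  have hSS : S * S = A := CFC.sqrt_mul_sqrt_self A hAps.nonneg
  have hSsymm : ∀ a b, S a b = S b a := by
    intro a b
    have := hSps.1
    calc S a b = S.conjTranspose a b := by conv_lhs => rw [← this]
      _ = S b a := by simp [Matrix.conjTranspose_apply]
  have hgram : ∀ i j, m i j = ∑ a, S i a * S j a := by
    intro i j
    have : (S * S) i j = m i j := by rw [hSS]; rfl
    rw [← this, Matrix.mul_apply]
    exact Finset.sum_congr rfl fun a _ => by rw [hSsymm a j]
  -- reduce to exp of inner products
  set d : Fin n → ℝ := fun i => c i * Real.exp (-γ * m i i) with hd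
  have hsplit : ∀ i j, c i * c j * Real.exp (-γ * (m i i + m j j - 2 * m i j))
      = d i * d j * Real.exp (2 * γ * m i j) := by
    intro i j
    have harg : -γ * (m i i + m j j - 2 * m i j)
        = (-γ * m i i) + (-γ * m j j) + (2 * γ * m i j) := by ring
    simp only [hd]
    rw [harg, Real.exp_add, Real.exp_add]
    ring
  simp only [hsplit]
  -- expand exp as a series
  have hexp : ∀ x : ℝ, Real.exp x = ∑' k : ℕ, x ^ k / (k.factorial : ℝ) := by
    intro x
    rw [Real.exp_eq_exp_ℝ, NormedSpace.exp_eq_tsum_div]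
  have hsummable : ∀ i j : Fin n, Summable (fun k : ℕ =>
      d i * d j * ((2 * γ * m i j) ^ k / (k.factorial : ℝ))) :=
    fun i j => (Real.summable_pow_div_factorial (2 * γ * m i j)).mul_left _
  have key : ∑ i, ∑ j, d i * d j * Real.exp (2 * γ * m i j)
      = ∑' k : ℕ, ∑ i, ∑ j, d i * d j * ((2 * γ * m i j) ^ k / (k.factorial : ℝ)) := by
    rw [eq_comm]
    rw [Summable.tsum_finsetSum (fun i _ => summable_sum (fun j _ => hsummable i j))]
    refine Finset.sum_congr rfl fun i _ => ?_
    rw [Summable.tsum_finsetSum (fun j _ => hsummable i j)]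
    refine Finset.sum_congr rfl fun j _ => ?_
    rw [hexp, ← tsum_mul_left]
  rw [key]
  refine tsum_nonneg fun k => ?_
  have : ∑ i, ∑ j, d i * d j * ((2 * γ * m i j) ^ k / (k.factorial : ℝ))
      = ((2 * γ) ^ k / (k.factorial : ℝ)) * ∑ i, ∑ j, d i * d j * (∑ a, S i a * S j a) ^ k := by
    rw [Finset.mul_sum]
    refine Finset.sum_congr rfl fun i _ => ?_
    rw [Finset.mul_sum]
    refine Finset.sum_congr rfl fun j _ => ?_
    rw [← hgram, mul_pow]
    ring
  rw [this]
  have h1 : (0:ℝ) ≤ (2 * γ) ^ k / (k.factorial : ℝ) := by positivity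
  exact mul_nonneg h1 (gram_pow_nonneg S k d)


section invCDFlemmas

variable (μ : Measure ℝ) [IsFiniteMeasure μ] {R t : ℝ}

lemma cdf_mono : Monotone fun x : ℝ => (μ (Set.Iic x)).toReal := fun a b hab =>
  ENNReal.toReal_mono (measure_ne_top μ _) (measure_mono (Set.Iic_subset_Iic.2 hab))

lemma invCDF_set_bddBelow (hlow : ∀ x : ℝ, x < -R → μ (Set.Iic x) = 0) (ht0 : 0 < t) :
    ∀ x ∈ {x : ℝ | t ≤ (μ (Set.Iic x)).toReal}, -R ≤ x := by
  intro x hx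
  by_contra hc
  push_neg at hc
  have h0 : μ (Set.Iic x) = 0 := hlow x hc
  simp only [Set.mem_setOf_eq, h0, ENNReal.toReal_zero] at hx
  linarith

lemma invCDF_le_iff (hlow : ∀ x : ℝ, x < -R → μ (Set.Iic x) = 0) (ht0 : 0 < t)
    (htR : t ≤ (μ (Set.Iic R)).toReal) (y : ℝ) :
    invCDF μ t ≤ y ↔ t ≤ (μ (Set.Iic y)).toReal := by
  have hbdd : BddBelow {x : ℝ | t ≤ (μ (Set.Iic x)).toReal} :=
    ⟨-R, fun x hx => invCDF_set_bddBelow μ hlow ht0 x hx⟩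
  have hne : {x : ℝ | t ≤ (μ (Set.Iic x)).toReal}.Nonempty := ⟨R, htR⟩
  constructor
  · intro h
    -- right continuity of the CDF
    have hInter : ⋂ k : ℕ, Set.Iic (y + 1/(k+1 : ℝ)) = Set.Iic y := by
      ext x
      simp only [Set.mem_iInter, Set.mem_Iic]
      constructor
      · intro hx
        refine le_of_forall_pos_le_add fun ε hε => ?_
        obtain ⟨k, hk⟩ := exists_nat_one_div_lt hε
        exact (hx k).trans (by linarith)
      · intro hx k
        have : (0:ℝ) < 1/(k+1 : ℝ) := by positivity
        linarith
    have hanti : Antitone fun k : ℕ => Set.Iic (y + 1/(k+1 : ℝ)) := by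
      intro k l hkl
      apply Set.Iic_subset_Iic.2
      have hkl' : (k : ℝ) ≤ (l : ℝ) := Nat.cast_le.2 hkl
      have : 1/(l+1 : ℝ) ≤ 1/(k+1 : ℝ) := by
        apply one_div_le_one_div_of_le
        · positivity
        · linarith
      linarith
    have htend : Filter.Tendsto (fun k : ℕ => μ (Set.Iic (y + 1/(k+1 : ℝ)))) Filter.atTop
        (nhds (μ (Set.Iic y))) := by
      have := tendsto_measure_iInter_atTop (μ := μ)
        (s := fun k : ℕ => Set.Iic (y + 1/(k+1 : ℝ)))
        (fun k => measurableSet_Iic.nullMeasurableSet) hanti ⟨0, measure_ne_top μ _⟩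
      rwa [hInter] at this
    have htend' : Filter.Tendsto (fun k : ℕ => (μ (Set.Iic (y + 1/(k+1 : ℝ)))).toReal)
        Filter.atTop (nhds ((μ (Set.Iic y)).toReal)) :=
      (ENNReal.tendsto_toReal (measure_ne_top μ _)).comp htend
    refine ge_of_tendsto' htend' fun k => ?_
    have hypos : (0:ℝ) < 1/(k+1:ℝ) := by positivity
    have hlt : invCDF μ t < y + 1/(k+1 : ℝ) := by linarith
    obtain ⟨x, hxS, hxlt⟩ := exists_lt_of_csInf_lt hne hlt
    exact le_trans hxS (cdf_mono μ hxlt.le)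
  · intro h
    exact csInf_le hbdd h

lemma invCDF_bounds (hlow : ∀ x : ℝ, x < -R → μ (Set.Iic x) = 0) (ht0 : 0 < t)
    (htR : t ≤ (μ (Set.Iic R)).toReal) : -R ≤ invCDF μ t ∧ invCDF μ t ≤ R := by
  have hbdd : BddBelow {x : ℝ | t ≤ (μ (Set.Iic x)).toReal} :=
    ⟨-R, fun x hx => invCDF_set_bddBelow μ hlow ht0 x hx⟩
  exact ⟨le_csInf ⟨R, htR⟩ fun x hx => invCDF_set_bddBelow μ hlow ht0 x hx, csInf_le hbdd htR⟩

end invCDFlemmas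


section Main

variable {r : ℕ}

local notation "E" => EuclideanSpace ℝ (Fin r)
local notation "Sph" => Metric.sphere (0 : EuclideanSpace ℝ (Fin r)) 1

instance uniformSphere_finite : IsFiniteMeasure (uniformSphere r) := by
  constructor
  rw [uniformSphere, Measure.smul_apply, smul_eq_mul]
  set a := (volume : Measure E).toSphere Set.univ with ha
  rcases eq_or_ne a 0 with h0 | h0
  · rw [h0]; simp
  · rcases eq_or_ne a ⊤ with hi | hi
    · rw [hi]; simp
    · rw [ENNReal.inv_mul_cancel h0 hi]; exact ENNReal.one_lt_top

instance ioc_prob : IsProbabilityMeasure (volume.restrict (Set.Ioc (0:ℝ) 1)) := by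
  constructor
  rw [Measure.restrict_apply_univ, Real.volume_Ioc]
  norm_num

theorem main (Ω : Set (EuclideanSpace ℝ (Fin r)))
    (hΩ : IsCompact Ω) (γ : ℝ) (hγ : 0 ≤ γ) :
    ∀ (n : ℕ) (P : Fin n → Measure (EuclideanSpace ℝ (Fin r))),
      (∀ i, IsProbabilityMeasure (P i)) → (∀ i, P i Ω = 1) →
      ∀ c : Fin n → ℝ,
        0 ≤ ∑ i, ∑ j, c i * c j * Real.exp (-γ * slicedW2Sq (P i) (P j)) := by
  classical
  intro n P hprob hPΩ c
  obtain ⟨R₀, hR₀⟩ := hΩ.isBounded.subset_closedBall 0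
  set R : ℝ := max R₀ 0 with hRdef
  have hR0 : (0:ℝ) ≤ R := le_max_right _ _
  have hΩR : Ω ⊆ Metric.closedBall 0 R :=
    hR₀.trans (Metric.closedBall_subset_closedBall (le_max_left _ _))
  have hΩmeas : MeasurableSet Ω := hΩ.isClosed.measurableSet
  have hcompl : ∀ i, P i Ωᶜ = 0 := by
    intro i
    haveI := hprob i
    rw [measure_compl hΩmeas (measure_ne_top _ _), hPΩ i, measure_univ]
    simp
  -- facts about the pushforward measures
  have hmf : ∀ θ : Sph, Measurable fun x : E => ⟪x, (θ : E)⟫ := fun θ =>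
    (continuous_id.inner continuous_const).measurable
  have hnormθ : ∀ θ : Sph, ‖(θ : E)‖ = 1 := fun θ => mem_sphere_zero_iff_norm.1 θ.2
  have hinner_bound : ∀ (θ : Sph) (x : E), x ∈ Ω → |⟪x, (θ : E)⟫| ≤ R := by
    intro θ x hx
    calc |⟪x, (θ : E)⟫| ≤ ‖x‖ * ‖(θ : E)‖ := abs_real_inner_le_norm x _
      _ = ‖x‖ := by rw [hnormθ θ, mul_one]
      _ ≤ R := by
          have := hΩR hx
          rwa [Metric.mem_closedBall, dist_zero_right] at this
  have hmap_apply : ∀ (i : Fin n) (θ : Sph) (y : ℝ),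
      ((P i).map fun x : E => ⟪x, (θ : E)⟫) (Set.Iic y)
        = P i {x : E | ⟪x, (θ : E)⟫ ≤ y} := by
    intro i θ y
    rw [Measure.map_apply (hmf θ) measurableSet_Iic]
    rfl
  have hmapfin : ∀ (i : Fin n) (θ : Sph),
      IsProbabilityMeasure ((P i).map fun x : E => ⟪x, (θ : E)⟫) := by
    intro i θ
    haveI := hprob i
    exact Measure.isProbabilityMeasure_map (hmf θ).aemeasurable
  have hlow : ∀ (i : Fin n) (θ : Sph) (y : ℝ), y < -R →
      ((P i).map fun x : E => ⟪x, (θ : E)⟫) (Set.Iic y) = 0 := by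
    intro i θ y hy
    rw [hmap_apply]
    refine measure_mono_null ?_ (hcompl i)
    intro x hx
    simp only [Set.mem_setOf_eq] at hx
    intro hxΩ
    have := hinner_bound θ x hxΩ
    rw [abs_le] at this
    linarith [this.1]
  have hup : ∀ (i : Fin n) (θ : Sph),
      (((P i).map fun x : E => ⟪x, (θ : E)⟫) (Set.Iic R)).toReal = 1 := by
    intro i θ
    haveI := hprob i
    rw [hmap_apply]
    have h1 : P i {x : E | ⟪x, (θ : E)⟫ ≤ R} = 1 := by
      refine le_antisymm prob_le_one ?_
      rw [← hPΩ i]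
      refine measure_mono fun x hx => ?_
      have := hinner_bound θ x hx
      rw [abs_le] at this
      exact this.2
    rw [h1, ENNReal.toReal_one]
  -- the sliced quantile functions
  set g : Fin n → Sph → ℝ → ℝ := fun i θ t =>
    invCDF ((P i).map fun x : E => ⟪x, (θ : E)⟫) t with hg
  set G : Fin n → Sph × ℝ → ℝ := fun i p =>
    if p.2 ∈ Set.Ioc (0:ℝ) 1 then g i p.1 p.2 else 0 with hGdef
  have hGbound : ∀ (i : Fin n) (p : Sph × ℝ), |G i p| ≤ R := by
    intro i p
    simp only [hGdef]
    split_ifs with hp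
    · haveI := hmapfin i p.1
      have hb := invCDF_bounds ((P i).map fun x : E => ⟪x, (p.1 : E)⟫)
        (fun y hy => hlow i p.1 y hy) hp.1 (by rw [hup i p.1]; exact hp.2)
      rw [abs_le]; exact hb
    · simpa using hR0
  have hGle : ∀ (i : Fin n) (y : ℝ) (p : Sph × ℝ), p.2 ∈ Set.Ioc (0:ℝ) 1 →
      (G i p ≤ y ↔ p.2 ≤ (P i {x : E | ⟪x, (p.1 : E)⟫ ≤ y}).toReal) := by
    intro i y p hp
    haveI := hmapfin i p.1
    simp only [hGdef, if_pos hp]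
    rw [hg]
    rw [invCDF_le_iff ((P i).map fun x : E => ⟪x, (p.1 : E)⟫)
      (fun z hz => hlow i p.1 z hz) hp.1 (by rw [hup i p.1]; exact hp.2) y]
    rw [hmap_apply]
  have hGmeas : ∀ i : Fin n, Measurable (G i) := by
    intro i
    haveI := hprob i
    apply measurable_of_Iic
    intro y
    have hFymeas : Measurable fun θ : Sph => (P i {x : E | ⟪x, (θ : E)⟫ ≤ y}).toReal := by
      have hcont : Continuous fun q : Sph × E => ⟪q.2, (q.1 : E)⟫ :=
        continuous_snd.inner (continuous_subtype_val.comp continuous_fst)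
      have hs : MeasurableSet {q : Sph × E | ⟪q.2, (q.1 : E)⟫ ≤ y} :=
        (isClosed_le hcont continuous_const).measurableSet
      exact ENNReal.measurable_toReal.comp (measurable_measure_prodMk_left hs)
    have hset : G i ⁻¹' Set.Iic y =
        ({p : Sph × ℝ | p.2 ∈ Set.Ioc (0:ℝ) 1} ∩
          {p : Sph × ℝ | p.2 ≤ (P i {x : E | ⟪x, (p.1 : E)⟫ ≤ y}).toReal}) ∪
        ({p : Sph × ℝ | p.2 ∈ Set.Ioc (0:ℝ) 1}ᶜ ∩ {_p : Sph × ℝ | (0:ℝ) ≤ y}) := by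
      ext p
      by_cases hp : p.2 ∈ Set.Ioc (0:ℝ) 1
      · simp only [Set.mem_preimage, Set.mem_Iic, Set.mem_union, Set.mem_inter_iff,
          Set.mem_setOf_eq, Set.mem_compl_iff, hp, not_true, false_and, or_false, true_and]
        exact hGle i y p hp
      · simp only [Set.mem_preimage, Set.mem_Iic, Set.mem_union, Set.mem_inter_iff,
          Set.mem_setOf_eq, Set.mem_compl_iff, hp, false_and, false_or, not_false_iff, true_and,
          hGdef, if_neg hp]
        simp
    rw [hset]
    refine MeasurableSet.union (MeasurableSet.inter ?_ ?_) (MeasurableSet.inter ?_ ?_)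
    · exact measurable_snd measurableSet_Ioc
    · exact measurableSet_le measurable_snd (hFymeas.comp measurable_fst)
    · exact (measurable_snd measurableSet_Ioc).compl
    · exact MeasurableSet.const _
  -- the Gram functions
  set ν : Measure ℝ := volume.restrict (Set.Ioc (0:ℝ) 1) with hν
  set C : Fin n → Fin n → Sph → ℝ := fun i j θ => ∫ t, G i (θ, t) * G j (θ, t) ∂ν with hC
  set m : Fin n → Fin n → ℝ := fun i j => ∫ θ, C i j θ ∂(uniformSphere r) with hm
  have hGtmeas : ∀ (i : Fin n) (θ : Sph), Measurable fun t => G i (θ, t) :=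
    fun i θ => (hGmeas i).comp measurable_prodMk_left
  have hint_t : ∀ (i j : Fin n) (θ : Sph),
      Integrable (fun t => G i (θ, t) * G j (θ, t)) ν := by
    intro i j θ
    refine Integrable.mono' (integrable_const (R * R))
      (((hGtmeas i θ).mul (hGtmeas j θ)).aestronglyMeasurable)
      (Filter.Eventually.of_forall fun t => ?_)
    rw [Real.norm_eq_abs, abs_mul]
    exact mul_le_mul (hGbound i (θ, t)) (hGbound j (θ, t)) (abs_nonneg _) hR0
  have hCmeas : ∀ i j : Fin n, StronglyMeasurable (C i j) := fun i j =>
    ((hGmeas i).mul (hGmeas j)).stronglyMeasurable.integral_prod_right'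
  have hCbound : ∀ (i j : Fin n) (θ : Sph), |C i j θ| ≤ R * R := by
    intro i j θ
    have h1 : ‖∫ t, G i (θ, t) * G j (θ, t) ∂ν‖ ≤ (R * R) * (ν Set.univ).toReal := by
      refine norm_integral_le_of_norm_le_const (Filter.Eventually.of_forall fun t => ?_)
      rw [Real.norm_eq_abs, abs_mul]
      exact mul_le_mul (hGbound i (θ, t)) (hGbound j (θ, t)) (abs_nonneg _) hR0
    rw [measure_univ, ENNReal.toReal_one, mul_one] at h1
    exact h1
  have hCint : ∀ i j : Fin n, Integrable (C i j) (uniformSphere r) := by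
    intro i j
    exact Integrable.mono' (integrable_const (R * R)) (hCmeas i j).aestronglyMeasurable
      (Filter.Eventually.of_forall fun θ => by rw [Real.norm_eq_abs]; exact hCbound i j θ)
  -- the key identity
  have hkey : ∀ i j : Fin n, slicedW2Sq (P i) (P j) = m i i + m j j - 2 * m i j := by
    intro i j
    have hθ : ∀ θ : Sph, (∫ t in Set.Ioc (0:ℝ) 1, (g i θ t - g j θ t) ^ 2)
        = C i i θ + C j j θ - 2 * C i j θ := by
      intro θ
      have h1 : (∫ t in Set.Ioc (0:ℝ) 1, (g i θ t - g j θ t) ^ 2)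
          = ∫ t, (G i (θ, t) - G j (θ, t)) ^ 2 ∂ν := by
        refine setIntegral_congr_fun measurableSet_Ioc fun t ht => ?_
        simp only [hGdef, if_pos ht]
      rw [h1]
      have h2 : (fun t => (G i (θ, t) - G j (θ, t)) ^ 2)
          = fun t => G i (θ, t) * G i (θ, t) + G j (θ, t) * G j (θ, t)
            - 2 * (G i (θ, t) * G j (θ, t)) := by
        funext t; ring
      have hadd : Integrable (fun t => G i (θ, t) * G i (θ, t) + G j (θ, t) * G j (θ, t)) ν :=
        (hint_t i i θ).add (hint_t j j θ)
      have hmul : Integrable (fun t => 2 * (G i (θ, t) * G j (θ, t))) ν :=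
        (hint_t i j θ).const_mul 2
      rw [h2, integral_sub hadd hmul, integral_add (hint_t i i θ) (hint_t j j θ),
        integral_const_mul]
    have h3 : slicedW2Sq (P i) (P j)
        = ∫ θ, (C i i θ + C j j θ - 2 * C i j θ) ∂(uniformSphere r) := by
      rw [slicedW2Sq]
      exact integral_congr_ae (Filter.Eventually.of_forall hθ)
    have hadd2 : Integrable (fun θ => C i i θ + C j j θ) (uniformSphere r) :=
      (hCint i i).add (hCint j j)
    have hmul2 : Integrable (fun θ => 2 * C i j θ) (uniformSphere r) :=
      (hCint i j).const_mul 2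
    rw [h3, integral_sub hadd2 hmul2, integral_add (hCint i i) (hCint j j),
      integral_const_mul, hm]
  -- symmetry
  have hmsymm : ∀ i j : Fin n, m i j = m j i := by
    intro i j
    simp only [hm, hC]
    refine integral_congr_ae (Filter.Eventually.of_forall fun θ => ?_)
    refine integral_congr_ae (Filter.Eventually.of_forall fun t => ?_)
    ring
  -- positive semidefiniteness of the Gram form
  have hpsd : ∀ c' : Fin n → ℝ, 0 ≤ ∑ i, ∑ j, c' i * c' j * m i j := by
    intro c'
    have h1 : ∑ i, ∑ j, c' i * c' j * m i j
        = ∫ θ, (∑ i, ∑ j, c' i * c' j * C i j θ) ∂(uniformSphere r) := by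
      rw [integral_finset_sum _ fun i _ =>
        integrable_finset_sum _ fun j _ => (hCint i j).const_mul _]
      refine Finset.sum_congr rfl fun i _ => ?_
      rw [integral_finset_sum _ fun j _ => (hCint i j).const_mul _]
      exact Finset.sum_congr rfl fun j _ => (integral_const_mul _ _).symm
    rw [h1]
    refine integral_nonneg fun θ => ?_
    have h2 : ∑ i, ∑ j, c' i * c' j * C i j θ
        = ∫ t, (∑ i, c' i * G i (θ, t)) ^ 2 ∂ν := by
      have h3 : (fun t => (∑ i, c' i * G i (θ, t)) ^ 2)
          = fun t => ∑ i, ∑ j, c' i * c' j * (G i (θ, t) * G j (θ, t)) := by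
        funext t
        rw [sq, Finset.sum_mul_sum]
        exact Finset.sum_congr rfl fun i _ => Finset.sum_congr rfl fun j _ => by ring
      rw [h3, integral_finset_sum _ fun i _ =>
        integrable_finset_sum _ fun j _ => ((hint_t i j θ)).const_mul _]
      refine Finset.sum_congr rfl fun i _ => ?_
      rw [integral_finset_sum _ fun j _ => (hint_t i j θ).const_mul _]
      exact Finset.sum_congr rfl fun j _ => (integral_const_mul _ _).symm
    rw [h2]
    exact integral_nonneg fun t => sq_nonneg _
  simp only [hkey]
  exact psd_exp m hmsymm hpsd γ hγ c

end Main


/-- **The Gaussian Sliced 2-Wasserstein kernel is positive definite.**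
Let `Ω ⊂ ℝ^r` be compact.  For every `γ ≥ 0`, the kernel
`K₂(P,Q) = exp(−γ·d_{SW₂}(P,Q)²)` is positive definite on the probability measures on `Ω`:
for every `n`, all probability measures `P₁, …, Pₙ` on `Ω` and all `c ∈ ℝⁿ`,
`∑_{i,j} cᵢ cⱼ exp(−γ·d_{SW₂}(Pᵢ,Pⱼ)²) ≥ 0`. -/
theorem gaussian_slicedW2_kernel_posdef {r : ℕ} (Ω : Set (EuclideanSpace ℝ (Fin r)))
    (hΩ : IsCompact Ω) (γ : ℝ) (hγ : 0 ≤ γ) :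
    ∀ (n : ℕ) (P : Fin n → Measure (EuclideanSpace ℝ (Fin r))),
      (∀ i, IsProbabilityMeasure (P i)) → (∀ i, P i Ω = 1) →
      ∀ c : Fin n → ℝ,
        0 ≤ ∑ i, ∑ j, c i * c j * Real.exp (-γ * slicedW2Sq (P i) (P j)) :=
  main Ω hΩ γ hγ
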